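/- Let X be a random variable over finite configurations, let D be the event that user u chose destination d (with prior Pr[D] = p), and let the adversary's observation partition the sample space into indistinguishability classes. Define Ψ(ω) = Pr[D | class of ω]. Then E[Ψ | D] ≥ p. In particular, for the onion-routing black-box model with compromise fraction b ∈ [0,1], E[Ψ | X_D(u)=d] ≥ b² + (1−b²)·p^u_d. -/

import Mathlib

/-- A configuration: each user's destination, whether each user's input is observed,
and whether each user's output is observed. -/
abbrev Config (n : ℕ) (Δ : Type) : Type := (Fin n → Δ) × (Fin n → Bool) × (Fin n → Bool)

/-- Probability of a configuration: users pick destinations independently according to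
`p`, and each input/output is independently observed with probability `b`. -/
def weight {n : ℕ} {Δ : Type} (p : Fin n → Δ → ℝ) (b : ℝ) (C : Config n Δ) : ℝ :=
  (∏ v, p v (C.1 v)) * (∏ v, if C.2.1 v then b else 1 - b) *
    (∏ v, if C.2.2 v then b else 1 - b)

/-- The adversary's observation of a configuration: which users' inputs are observed,
the linked destination of each user whose input and output are both observed, and the
multiset of observed destinations not linked to an observed input. -/
def obs {n : ℕ} {Δ : Type} [Fintype Δ] [DecidableEq Δ] (C : Config n Δ) :
    (Fin n → Bool) × (Fin n → Option Δ) × Multiset Δ :=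
  (C.2.1,
   fun v => if C.2.1 v && C.2.2 v then some (C.1 v) else none,
   (Finset.univ.filter fun v => C.2.1 v = false ∧ C.2.2 v = true).val.map C.1)

/-- The posterior probability `Ψ` that user `u` chose destination `d`, given the
adversary's observation (i.e., given the indistinguishability class of `C`). -/
noncomputable def post {n : ℕ} {Δ : Type} [Fintype Δ] [DecidableEq Δ]
    (p : Fin n → Δ → ℝ) (b : ℝ) (u : Fin n) (d : Δ) (C : Config n Δ) : ℝ :=
  (∑ C' ∈ Finset.univ.filter (fun C' : Config n Δ => obs C' = obs C ∧ C'.1 u = d),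
      weight p b C') /
  (∑ C' ∈ Finset.univ.filter (fun C' : Config n Δ => obs C' = obs C), weight p b C')

/-- The expected posterior probability `E[Ψ | X_D(u) = d]`. -/
noncomputable def expPost {n : ℕ} {Δ : Type} [Fintype Δ] [DecidableEq Δ]
    (p : Fin n → Δ → ℝ) (b : ℝ) (u : Fin n) (d : Δ) : ℝ :=
  (∑ C ∈ Finset.univ.filter (fun C : Config n Δ => C.1 u = d),
      weight p b C * post p b u d C) /
  (∑ C ∈ Finset.univ.filter (fun C : Config n Δ => C.1 u = d), weight p b C)


open Finset in
lemma lemA {Ω κ : Type} [Fintype Ω] [DecidableEq Ω] [DecidableEq κ]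
    (w : Ω → ℝ) (hw : ∀ ω, 0 ≤ w ω) (D E : Finset Ω) (f : Ω → κ)
    (hE : ∀ ω ω', f ω = f ω' → (ω ∈ E ↔ ω' ∈ E)) :
    (∑ ω ∈ D ∩ E, w ω) ^ 2 / (∑ ω ∈ E, w ω) ≤
      ∑ ω ∈ D ∩ E, w ω *
        ((∑ ω' ∈ D.filter (fun ω' => f ω' = f ω), w ω') /
         (∑ ω' ∈ Finset.univ.filter (fun ω' => f ω' = f ω), w ω')) := by
  classical
  set a : κ → ℝ := fun c => ∑ ω' ∈ D.filter (fun ω' => f ω' = c), w ω' with ha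
  set bb : κ → ℝ := fun c => ∑ ω' ∈ Finset.univ.filter (fun ω' => f ω' = c), w ω' with hbb
  set T : Finset κ := (D ∩ E).image f with hT
  have ha0 : ∀ c, 0 ≤ a c := fun c => Finset.sum_nonneg fun _ _ => hw _
  have hb0 : ∀ c, 0 ≤ bb c := fun c => Finset.sum_nonneg fun _ _ => hw _
  have hab : ∀ c, a c ≤ bb c := fun c =>
    Finset.sum_le_sum_of_subset_of_nonneg
      (Finset.filter_subset_filter _ (Finset.subset_univ D)) (fun _ _ _ => hw _)
  -- each fiber of D∩E over c ∈ T has D.filter-sum = (D∩E).filter-sum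
  have hfiber : ∀ c ∈ T, (D ∩ E).filter (fun ω => f ω = c) = D.filter (fun ω => f ω = c) := by
    intro c hc
    obtain ⟨ω₀, hω₀, rfl⟩ := Finset.mem_image.1 hc
    ext ω
    simp only [Finset.mem_filter, Finset.mem_inter]
    constructor
    · rintro ⟨⟨h1, _⟩, h3⟩; exact ⟨h1, h3⟩
    · rintro ⟨h1, h3⟩
      exact ⟨⟨h1, (hE ω₀ ω h3.symm).1 (Finset.mem_inter.1 hω₀).2⟩, h3⟩
  have hclassE : ∀ c ∈ T, Finset.univ.filter (fun ω => f ω = c) ⊆ E := by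
    intro c hc ω hω
    obtain ⟨ω₀, hω₀, rfl⟩ := Finset.mem_image.1 hc
    exact (hE ω₀ ω (Finset.mem_filter.1 hω).2.symm).1 (Finset.mem_inter.1 hω₀).2
  have hsum1 : ∑ ω ∈ D ∩ E, w ω = ∑ c ∈ T, a c := by
    rw [← Finset.sum_fiberwise_of_maps_to (g := f) (fun x hx => Finset.mem_image_of_mem f hx) w]
    exact Finset.sum_congr rfl fun c hc => by rw [hfiber c hc]
  have hRHS : ∑ c ∈ T, a c ^ 2 / bb c ≤
      ∑ ω ∈ D ∩ E, w ω * ((∑ ω' ∈ D.filter (fun ω' => f ω' = f ω), w ω') /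
         (∑ ω' ∈ Finset.univ.filter (fun ω' => f ω' = f ω), w ω')) := by
    rw [← Finset.sum_fiberwise_of_maps_to (g := f) (fun x hx => Finset.mem_image_of_mem f hx)]
    refine le_of_eq (Finset.sum_congr rfl fun c hc => ?_)
    have : ∀ ω ∈ (D ∩ E).filter (fun ω => f ω = c),
        w ω * ((∑ ω' ∈ D.filter (fun ω' => f ω' = f ω), w ω') /
          (∑ ω' ∈ Finset.univ.filter (fun ω' => f ω' = f ω), w ω')) = w ω * (a c / bb c) := by
      intro ω hω
      rw [(Finset.mem_filter.1 hω).2]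
    rw [Finset.sum_congr rfl this, ← Finset.sum_mul, hfiber c hc]
    show a c ^ 2 / bb c = a c * (a c / bb c)
    rw [sq, mul_div_assoc]
  refine le_trans ?_ hRHS
  set T' : Finset κ := T.filter (fun c => bb c ≠ 0) with hT'
  have hTa : ∑ c ∈ T, a c = ∑ c ∈ T', a c := by
    rw [hT', Finset.sum_filter]
    refine Finset.sum_congr rfl fun c hc => ?_
    by_cases h : bb c = 0
    · simp [h, le_antisymm ((hab c).trans h.le) (ha0 c)]
    · simp [h]
  have hT'b : ∑ c ∈ T', bb c ≤ ∑ ω ∈ E, w ω := by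
    have : ∑ c ∈ T', bb c = ∑ ω ∈ T'.biUnion (fun c => Finset.univ.filter (fun ω => f ω = c)), w ω := by
      rw [Finset.sum_biUnion]
      intro c hc c' hc' hne
      simp only [Finset.disjoint_left, Finset.mem_filter]
      rintro ω ⟨_, rfl⟩ ⟨_, h2⟩
      exact hne h2
    rw [this]
    refine Finset.sum_le_sum_of_subset_of_nonneg ?_ (fun _ _ _ => hw _)
    intro ω hω
    obtain ⟨c, hc, hωc⟩ := Finset.mem_biUnion.1 hω
    exact hclassE c (Finset.mem_filter.1 hc).1 hωc
  have hCS : (∑ c ∈ T', a c) ^ 2 / (∑ c ∈ T', bb c) ≤ ∑ c ∈ T', a c ^ 2 / bb c :=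
    Finset.sq_sum_div_le_sum_sq_div T' a fun c hc =>
      lt_of_le_of_ne (hb0 c) (Ne.symm (Finset.mem_filter.1 hc).2)
  have hmono : ∑ c ∈ T', a c ^ 2 / bb c ≤ ∑ c ∈ T, a c ^ 2 / bb c :=
    Finset.sum_le_sum_of_subset_of_nonneg (Finset.filter_subset _ _)
      (fun c _ _ => div_nonneg (sq_nonneg _) (hb0 c))
  refine le_trans ?_ (hCS.trans hmono)
  rw [hsum1, hTa]
  rcases eq_or_lt_of_le (Finset.sum_nonneg (fun c (_ : c ∈ T') => hb0 c)) with h0 | h0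
  · have : ∑ c ∈ T', a c = 0 := by
      have h1 : ∑ c ∈ T', a c ≤ ∑ c ∈ T', bb c := Finset.sum_le_sum fun c _ => hab c
      have h2 : 0 ≤ ∑ c ∈ T', a c := Finset.sum_nonneg fun c _ => ha0 c
      linarith [h1, h2, h0.symm.le, h0.symm.ge]
    rw [this]
    simp
  · exact div_le_div_of_nonneg_left (sq_nonneg _) h0 hT'b

lemma coordSum {ι A : Type} [Fintype ι] [DecidableEq ι] [Fintype A]
    (g : ι → A → ℝ) (hg : ∀ v, ∑ a, g v a = 1) (u : ι) (G : A → ℝ) :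
    ∑ x : ι → A, G (x u) * ∏ v, g v (x v) = ∑ a, G a * g u a := by
  classical
  have key : ∀ x : ι → A, G (x u) * ∏ v, g v (x v)
      = ∏ v, ((if v = u then G (x v) else 1) * g v (x v)) := by
    intro x
    rw [Finset.prod_mul_distrib, Finset.prod_ite_eq' Finset.univ u (fun v => G (x v))]
    simp
  rw [Finset.sum_congr rfl (fun x _ => key x), ← Fintype.piFinset_univ,
    ← Finset.prod_univ_sum (t := fun _ => (Finset.univ : Finset A))
      (f := fun v a => (if v = u then G a else 1) * g v a)]
  rw [Fintype.prod_eq_mul_prod_compl u]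
  simp only [if_pos rfl]
  rw [Finset.prod_congr rfl (fun v hv => by
    simp only [Finset.mem_compl, Finset.mem_singleton] at hv
    simpa [hv] using hg v)]
  simp

lemma configSum {n : ℕ} {Δ : Type} [Fintype Δ]
    (p : Fin n → Δ → ℝ) (b : ℝ) (hpsum : ∀ v, ∑ δ, p v δ = 1) (u : Fin n)
    (F : Δ → Bool → Bool → ℝ) :
    ∑ C : Config n Δ, F (C.1 u) (C.2.1 u) (C.2.2 u) * weight p b C
      = ∑ δ, (∑ i, (∑ o, F δ i o * (if o then b else 1 - b)) * (if i then b else 1 - b))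
          * p u δ := by
  classical
  have hq : ∀ _v : Fin n, ∑ t : Bool, (if t then b else 1 - b) = 1 := by
    intro v; rw [Fintype.sum_bool]; norm_num
  calc ∑ C : Config n Δ, F (C.1 u) (C.2.1 u) (C.2.2 u) * weight p b C
      = ∑ x : Fin n → Δ, (∑ y : Fin n → Bool, (∑ z : Fin n → Bool,
          F (x u) (y u) (z u) * ∏ v, (if z v then b else 1 - b))
            * ∏ v, (if y v then b else 1 - b)) * ∏ v, p v (x v) := by
        rw [Fintype.sum_prod_type]
        refine Finset.sum_congr rfl fun x _ => ?_
        rw [Fintype.sum_prod_type, Finset.sum_mul]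
        refine Finset.sum_congr rfl fun y _ => ?_
        rw [Finset.sum_mul, Finset.sum_mul]
        refine Finset.sum_congr rfl fun z _ => ?_
        simp only [weight]
        ring
    _ = ∑ x : Fin n → Δ, (∑ y : Fin n → Bool, (∑ o, F (x u) (y u) o * (if o then b else 1 - b))
            * ∏ v, (if y v then b else 1 - b)) * ∏ v, p v (x v) := by
        refine Finset.sum_congr rfl fun x _ => ?_
        congr 1
        refine Finset.sum_congr rfl fun y _ => ?_
        congr 1
        exact coordSum (fun _ t => if t then b else 1 - b) hq u (F (x u) (y u))
    _ = ∑ x : Fin n → Δ, (∑ i, (∑ o, F (x u) i o * (if o then b else 1 - b))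
            * (if i then b else 1 - b)) * ∏ v, p v (x v) := by
        refine Finset.sum_congr rfl fun x _ => ?_
        congr 1
        exact coordSum (fun _ t => if t then b else 1 - b) hq u
          (fun i => ∑ o, F (x u) i o * (if o then b else 1 - b))
    _ = _ := coordSum p hpsum u (fun δ => ∑ i, (∑ o, F δ i o * (if o then b else 1 - b)) * (if i then b else 1 - b))

section
variable {n : ℕ} {Δ : Type} [Fintype Δ] [DecidableEq Δ]
  (p : Fin n → Δ → ℝ) (b : ℝ) (u : Fin n) (d : Δ)

lemma margD (hpsum : ∀ v, ∑ δ, p v δ = 1) :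
    ∑ C ∈ Finset.univ.filter (fun C : Config n Δ => C.1 u = d), weight p b C = p u d := by
  classical
  have h : ∑ C ∈ Finset.univ.filter (fun C : Config n Δ => C.1 u = d), weight p b C
      = ∑ C : Config n Δ,
        (fun δ (_ _ : Bool) => if δ = d then (1:ℝ) else 0) (C.1 u) (C.2.1 u) (C.2.2 u)
          * weight p b C := by
    rw [Finset.sum_filter]
    exact Finset.sum_congr rfl fun C hC => (boole_mul _ _).symm
  rw [h, configSum p b hpsum u (fun δ _ _ => if δ = d then (1:ℝ) else 0)]
  have h2 : ∀ δ : Δ, (∑ i : Bool, (∑ o : Bool, (if δ = d then (1:ℝ) else 0) * (if o then b else 1 - b))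
        * (if i then b else 1 - b)) * p u δ = if δ = d then p u δ else 0 := by
    intro δ; by_cases hδ : δ = d <;> simp [hδ, Fintype.sum_bool] <;> ring
  rw [Finset.sum_congr rfl fun δ _ => h2 δ, Finset.sum_ite_eq' Finset.univ d (p u)]
  simp

lemma margDIO (hpsum : ∀ v, ∑ δ, p v δ = 1) (i₀ o₀ : Bool) :
    ∑ C ∈ Finset.univ.filter
        (fun C : Config n Δ => C.1 u = d ∧ C.2.1 u = i₀ ∧ C.2.2 u = o₀), weight p b C
      = p u d * (if i₀ then b else 1 - b) * (if o₀ then b else 1 - b) := by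
  classical
  have h : ∑ C ∈ Finset.univ.filter
        (fun C : Config n Δ => C.1 u = d ∧ C.2.1 u = i₀ ∧ C.2.2 u = o₀), weight p b C
      = ∑ C : Config n Δ,
        (fun δ (i o : Bool) => if δ = d ∧ i = i₀ ∧ o = o₀ then (1:ℝ) else 0)
          (C.1 u) (C.2.1 u) (C.2.2 u) * weight p b C := by
    rw [Finset.sum_filter]
    exact Finset.sum_congr rfl fun C hC => (boole_mul _ _).symm
  rw [h, configSum p b hpsum u (fun δ i o => if δ = d ∧ i = i₀ ∧ o = o₀ then (1:ℝ) else 0)]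
  have h2 : ∀ δ : Δ, (∑ i : Bool, (∑ o : Bool, (if δ = d ∧ i = i₀ ∧ o = o₀ then (1:ℝ) else 0)
          * (if o then b else 1 - b)) * (if i then b else 1 - b)) * p u δ
      = if δ = d then ((if i₀ then b else 1 - b) * (if o₀ then b else 1 - b)) * p u δ else 0 := by
    intro δ
    by_cases hδ : δ = d <;> cases i₀ <;> cases o₀ <;> simp [hδ, Fintype.sum_bool, -mul_eq_mul_right_iff] <;> first | ring1 | tauto
  rw [Finset.sum_congr rfl fun δ _ => h2 δ, Finset.sum_ite_eq' Finset.univ d]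
  simp; ring

lemma margDI (hpsum : ∀ v, ∑ δ, p v δ = 1) (i₀ : Bool) :
    ∑ C ∈ Finset.univ.filter
        (fun C : Config n Δ => C.1 u = d ∧ C.2.1 u = i₀), weight p b C
      = p u d * (if i₀ then b else 1 - b) := by
  classical
  have h : ∑ C ∈ Finset.univ.filter
        (fun C : Config n Δ => C.1 u = d ∧ C.2.1 u = i₀), weight p b C
      = ∑ C : Config n Δ,
        (fun δ (i _ : Bool) => if δ = d ∧ i = i₀ then (1:ℝ) else 0)
          (C.1 u) (C.2.1 u) (C.2.2 u) * weight p b C := by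
    rw [Finset.sum_filter]
    exact Finset.sum_congr rfl fun C hC => (boole_mul _ _).symm
  rw [h, configSum p b hpsum u (fun δ i _ => if δ = d ∧ i = i₀ then (1:ℝ) else 0)]
  have h2 : ∀ δ : Δ, (∑ i : Bool, (∑ o : Bool, (if δ = d ∧ i = i₀ then (1:ℝ) else 0)
          * (if o then b else 1 - b)) * (if i then b else 1 - b)) * p u δ
      = if δ = d then (if i₀ then b else 1 - b) * p u δ else 0 := by
    intro δ
    by_cases hδ : δ = d <;> cases i₀ <;> simp [hδ, Fintype.sum_bool, -mul_eq_mul_right_iff] <;> first | ring1 | tauto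
  rw [Finset.sum_congr rfl fun δ _ => h2 δ, Finset.sum_ite_eq' Finset.univ d]
  simp; ring

lemma margIO (hpsum : ∀ v, ∑ δ, p v δ = 1) (i₀ o₀ : Bool) :
    ∑ C ∈ Finset.univ.filter
        (fun C : Config n Δ => C.2.1 u = i₀ ∧ C.2.2 u = o₀), weight p b C
      = (if i₀ then b else 1 - b) * (if o₀ then b else 1 - b) := by
  classical
  have h : ∑ C ∈ Finset.univ.filter
        (fun C : Config n Δ => C.2.1 u = i₀ ∧ C.2.2 u = o₀), weight p b C
      = ∑ C : Config n Δ,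
        (fun _ (i o : Bool) => if i = i₀ ∧ o = o₀ then (1:ℝ) else 0)
          (C.1 u) (C.2.1 u) (C.2.2 u) * weight p b C := by
    rw [Finset.sum_filter]
    exact Finset.sum_congr rfl fun C hC => (boole_mul _ _).symm
  rw [h, configSum p b hpsum u (fun _ i o => if i = i₀ ∧ o = o₀ then (1:ℝ) else 0)]
  have h2 : ∀ δ : Δ, (∑ i : Bool, (∑ o : Bool, (if i = i₀ ∧ o = o₀ then (1:ℝ) else 0)
          * (if o then b else 1 - b)) * (if i then b else 1 - b)) * p u δ
      = ((if i₀ then b else 1 - b) * (if o₀ then b else 1 - b)) * p u δ := by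
    intro δ
    cases i₀ <;> cases o₀ <;> simp [Fintype.sum_bool, -mul_eq_mul_right_iff] <;> first | ring1 | tauto
  rw [Finset.sum_congr rfl fun δ _ => h2 δ, ← Finset.mul_sum, hpsum u, mul_one]

lemma margI (hpsum : ∀ v, ∑ δ, p v δ = 1) (i₀ : Bool) :
    ∑ C ∈ Finset.univ.filter
        (fun C : Config n Δ => C.2.1 u = i₀), weight p b C
      = (if i₀ then b else 1 - b) := by
  classical
  have h : ∑ C ∈ Finset.univ.filter
        (fun C : Config n Δ => C.2.1 u = i₀), weight p b C
      = ∑ C : Config n Δ,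
        (fun _ (i _ : Bool) => if i = i₀ then (1:ℝ) else 0)
          (C.1 u) (C.2.1 u) (C.2.2 u) * weight p b C := by
    rw [Finset.sum_filter]
    exact Finset.sum_congr rfl fun C hC => (boole_mul _ _).symm
  rw [h, configSum p b hpsum u (fun _ i _ => if i = i₀ then (1:ℝ) else 0)]
  have h2 : ∀ δ : Δ, (∑ i : Bool, (∑ o : Bool, (if i = i₀ then (1:ℝ) else 0)
          * (if o then b else 1 - b)) * (if i then b else 1 - b)) * p u δ
      = (if i₀ then b else 1 - b) * p u δ := by
    intro δ
    cases i₀ <;> simp [Fintype.sum_bool, -mul_eq_mul_right_iff] <;> first | ring1 | tauto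
  rw [Finset.sum_congr rfl fun δ _ => h2 δ, ← Finset.mul_sum, hpsum u, mul_one]

end

section Main
variable {n : ℕ} {Δ : Type} [Fintype Δ] [DecidableEq Δ]

lemma obs_eq_parts {u : Fin n} {C C' : Config n Δ} (h : obs C = obs C') :
    C.2.1 u = C'.2.1 u ∧ (C.2.1 u && C.2.2 u) = (C'.2.1 u && C'.2.2 u) := by
  have h1 := congrArg (fun t : (Fin n → Bool) × (Fin n → Option Δ) × Multiset Δ => t.1 u) h
  have h2 := congrArg (fun t : (Fin n → Bool) × (Fin n → Option Δ) × Multiset Δ => t.2.1 u) h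
  simp only [obs] at h1 h2
  refine ⟨h1, ?_⟩
  cases hc : (C.2.1 u && C.2.2 u) <;> cases hc' : (C'.2.1 u && C'.2.2 u) <;>
    rw [hc, hc'] at h2 <;> simp_all

set_option maxHeartbeats 1000000 in
theorem part2 (p : Fin n → Δ → ℝ) (b : ℝ) (hb0 : 0 ≤ b) (hb1 : b ≤ 1)
    (hp : ∀ v δ, 0 ≤ p v δ) (hpsum : ∀ v, ∑ δ, p v δ = 1)
    (u : Fin n) (d : Δ) (hpd : 0 < p u d) :
    b ^ 2 + (1 - b ^ 2) * p u d ≤ expPost p b u d := by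
  classical
  set w : Config n Δ → ℝ := weight p b with hwdef
  have hw : ∀ C, 0 ≤ w C := by
    intro C
    refine mul_nonneg (mul_nonneg (Finset.prod_nonneg fun v _ => hp v _)
      (Finset.prod_nonneg fun v _ => ?_)) (Finset.prod_nonneg fun v _ => ?_) <;>
      (try dsimp only) <;> split <;> linarith
  set D : Finset (Config n Δ) := Finset.univ.filter (fun C : Config n Δ => C.1 u = d) with hDdef
  set P : ℝ := p u d with hP
  have hD : ∑ C ∈ D, w C = P := margD p b u d hpsum
  -- post in D-filter form
  have hfilt : ∀ C : Config n Δ,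
      Finset.univ.filter (fun C' : Config n Δ => obs C' = obs C ∧ C'.1 u = d)
        = D.filter (fun C' => obs C' = obs C) := by
    intro C
    rw [hDdef, Finset.filter_filter]
    exact Finset.filter_congr fun C' _ => by tauto
  have hpost : ∀ C : Config n Δ, post p b u d C =
      (∑ C' ∈ D.filter (fun C' => obs C' = obs C), w C') /
      (∑ C' ∈ Finset.univ.filter (fun C' => obs C' = obs C), w C') := by
    intro C
    unfold post
    rw [hfilt C]
  -- split the numerator sum
  set f : Config n Δ → ℝ := fun C => w C * post p b u d C with hfdef
  have hsplit : ∑ C ∈ D, f C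
      = ∑ C ∈ D.filter (fun C => C.2.1 u = true ∧ C.2.2 u = true), f C
      + ∑ C ∈ D.filter (fun C => C.2.1 u = true ∧ C.2.2 u = false), f C
      + ∑ C ∈ D.filter (fun C => C.2.1 u = false), f C := by
    have h1 : ∀ C ∈ D, f C = (if C.2.1 u = true ∧ C.2.2 u = true then f C else 0)
        + (if C.2.1 u = true ∧ C.2.2 u = false then f C else 0)
        + (if C.2.1 u = false then f C else 0) := by
      intro C _
      cases ha : C.2.1 u <;> cases hbb : C.2.2 u <;> simp [ha, hbb]
    rw [Finset.sum_congr rfl h1, Finset.sum_add_distrib, Finset.sum_add_distrib,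
      ← Finset.sum_filter, ← Finset.sum_filter, ← Finset.sum_filter]
  -- Term 1 : both observed, post = 1
  have hT1 : ∑ C ∈ D.filter (fun C => C.2.1 u = true ∧ C.2.2 u = true), f C
      = P * b * b := by
    have hterm : ∀ C ∈ D.filter (fun C => C.2.1 u = true ∧ C.2.2 u = true), f C = w C := by
      intro C hC
      simp only [Finset.mem_filter, hDdef, Finset.mem_univ, true_and] at hC
      obtain ⟨h1, h21, h22⟩ := hC
      have hset : Finset.univ.filter (fun C' : Config n Δ => obs C' = obs C ∧ C'.1 u = d)
          = Finset.univ.filter (fun C' : Config n Δ => obs C' = obs C) := by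
        refine Finset.filter_congr fun C' _ => ?_
        simp only [and_iff_left_iff_imp]
        intro hobs
        have h2 := congrArg (fun t : (Fin n → Bool) × (Fin n → Option Δ) × Multiset Δ
          => t.2.1 u) hobs
        simp only [obs, h21, h22, Bool.and_self, if_true] at h2
        cases hc : (C'.2.1 u && C'.2.2 u) <;> rw [hc] at h2 <;> simp at h2
        rw [h2, h1]
      by_cases hden : (∑ C' ∈ Finset.univ.filter
          (fun C' : Config n Δ => obs C' = obs C), w C') = 0
      · have hwC : w C = 0 := by
          have hle : w C ≤ ∑ C' ∈ Finset.univ.filter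
              (fun C' : Config n Δ => obs C' = obs C), w C' :=
            Finset.single_le_sum (fun C' _ => hw C') (by simp)
          have := hw C
          linarith [hle, hden.le]
        simp [hfdef, hwC]
      · simp [hfdef, post, hset, ← hwdef, div_self hden]
    rw [Finset.sum_congr rfl hterm, Finset.filter_filter]
    have := margDIO p b u d hpsum true true
    simpa using this
  -- lemA applications
  have happ : ∀ (E : Finset (Config n Δ)),
      (∀ C C' : Config n Δ, obs C = obs C' → (C ∈ E ↔ C' ∈ E)) →
      (∑ C ∈ D ∩ E, w C) ^ 2 / (∑ C ∈ E, w C) ≤ ∑ C ∈ D ∩ E, f C := by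
    intro E hE
    have h := lemA w hw D E obs hE
    refine h.trans (le_of_eq (Finset.sum_congr rfl fun C _ => ?_))
    rw [hfdef]
    dsimp only
    rw [hpost C]
  -- Term 2 : input observed, output not
  have hT2 : P ^ 2 * (b * (1 - b)) ≤
      ∑ C ∈ D.filter (fun C => C.2.1 u = true ∧ C.2.2 u = false), f C := by
    set E : Finset (Config n Δ) :=
      Finset.univ.filter (fun C => C.2.1 u = true ∧ C.2.2 u = false) with hEdef
    have hDE : D.filter (fun C => C.2.1 u = true ∧ C.2.2 u = false) = D ∩ E := by
      rw [hEdef]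
      ext C
      simp only [Finset.mem_filter, Finset.mem_inter, Finset.mem_univ, true_and]
      try tauto
    have hE : ∀ C C' : Config n Δ, obs C = obs C' → (C ∈ E ↔ C' ∈ E) := by
      intro C C' hobs
      obtain ⟨e1, e2⟩ := obs_eq_parts (u := u) hobs
      clear hobs
      simp only [hEdef, Finset.mem_filter, Finset.mem_univ, true_and]
      cases h3 : C'.2.1 u
      · rw [e1, h3]; simp
      · rw [e1, h3] at e2
        simp only [Bool.true_and] at e2
        rw [e1, h3, e2]
    have hnum : ∑ C ∈ D ∩ E, w C = P * (b * (1 - b)) := by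
      have : D ∩ E = Finset.univ.filter
          (fun C : Config n Δ => C.1 u = d ∧ C.2.1 u = true ∧ C.2.2 u = false) := by
        rw [hDdef, hEdef]
        ext C
        simp only [Finset.mem_filter, Finset.mem_inter, Finset.mem_univ, true_and]
        try tauto
      rw [this]
      have := margDIO p b u d hpsum true false
      simpa [mul_assoc] using this
    have hden : ∑ C ∈ E, w C = b * (1 - b) := by
      rw [hEdef]
      have := margIO p b u hpsum true false
      simpa using this
    have h := happ E hE
    rw [hnum, hden, hDE] at *
    refine le_trans (le_of_eq ?_) h
    rcases eq_or_ne (b * (1 - b)) 0 with h0 | h0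
    · rw [h0]; simp
    · field_simp
  -- Term 3 : input unobserved
  have hT3 : P ^ 2 * (1 - b) ≤ ∑ C ∈ D.filter (fun C => C.2.1 u = false), f C := by
    set E : Finset (Config n Δ) :=
      Finset.univ.filter (fun C => C.2.1 u = false) with hEdef
    have hDE : D.filter (fun C => C.2.1 u = false) = D ∩ E := by
      rw [hEdef]
      ext C
      simp only [Finset.mem_filter, Finset.mem_inter, Finset.mem_univ, true_and]
      try tauto
    have hE : ∀ C C' : Config n Δ, obs C = obs C' → (C ∈ E ↔ C' ∈ E) := by
      intro C C' hobs
      obtain ⟨e1, _⟩ := obs_eq_parts (u := u) hobs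
      simp only [hEdef, Finset.mem_filter, Finset.mem_univ, true_and, e1]
    have hnum : ∑ C ∈ D ∩ E, w C = P * (1 - b) := by
      have : D ∩ E = Finset.univ.filter
          (fun C : Config n Δ => C.1 u = d ∧ C.2.1 u = false) := by
        rw [hDdef, hEdef]
        ext C
        simp only [Finset.mem_filter, Finset.mem_inter, Finset.mem_univ, true_and]
        try tauto
      rw [this]
      have := margDI p b u d hpsum false
      simpa using this
    have hden : ∑ C ∈ E, w C = 1 - b := by
      rw [hEdef]
      have := margI p b u hpsum false
      simpa using this
    have h := happ E hE
    rw [hnum, hden, hDE] at *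
    refine le_trans (le_of_eq ?_) h
    rcases eq_or_ne (1 - b) 0 with h0 | h0
    · rw [h0]; simp
    · field_simp
  -- assemble
  have hNum : P * b * b + P ^ 2 * (b * (1 - b)) + P ^ 2 * (1 - b) ≤ ∑ C ∈ D, f C := by
    rw [hsplit, hT1]
    linarith [hT2, hT3]
  have hexp : expPost p b u d = (∑ C ∈ D, f C) / P := by
    unfold expPost
    rw [← hDdef] at *
    rw [hD]
  rw [hexp, le_div_iff₀ hpd]
  nlinarith [hNum]

end Main

/-- (i) In a finite probability space partitioned into indistinguishability classes by
an observation map `f`, the expected posterior probability of an event `D` conditioned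
on `D` is at least its prior `pr`. (ii) In particular, in the black-box onion-routing
model with compromise fraction `b`, `E[Ψ | X_D(u)=d] ≥ b² + (1−b²)·p^u_d`. -/
theorem stmt_2 :
    (∀ (Ω κ : Type) [Fintype Ω] [DecidableEq Ω] [DecidableEq κ]
      (w : Ω → ℝ), (∀ ω, 0 ≤ w ω) → (∑ ω, w ω) = 1 →
      ∀ (D : Finset Ω) (f : Ω → κ) (pr : ℝ), (∑ ω ∈ D, w ω) = pr → 0 < pr →
      pr ≤ (∑ ω ∈ D, w ω *
          ((∑ ω' ∈ D.filter (fun ω' => f ω' = f ω), w ω') /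
            (∑ ω' ∈ Finset.univ.filter (fun ω' => f ω' = f ω), w ω'))) / pr) ∧
    (∀ (n : ℕ) (Δ : Type) [Fintype Δ] [DecidableEq Δ]
      (p : Fin n → Δ → ℝ) (b : ℝ), 0 ≤ b → b ≤ 1 →
      (∀ v δ, 0 ≤ p v δ) → (∀ v, ∑ δ, p v δ = 1) →
      ∀ (u : Fin n) (d : Δ), 0 < p u d →
      b ^ 2 + (1 - b ^ 2) * p u d ≤ expPost p b u d) := by
  constructor
  · intro Ω κ _ _ _ w hw hsum D f pr hpr hprpos
    have h := lemA w hw D Finset.univ f (fun ω ω' _ => by simp)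
    rw [Finset.inter_univ, hpr] at h
    have hE1 : ∑ ω ∈ (Finset.univ : Finset Ω), w ω = 1 := hsum
    rw [hE1, div_one] at h
    rw [le_div_iff₀ hprpos]
    calc pr * pr = pr ^ 2 := by ring
    _ ≤ _ := h
  · intro n Δ _ _ p b hb0 hb1 hp hpsum u d hpd
    exact part2 p b hb0 hb1 hp hpsum u d hpd
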